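/- arXiv:2211.04237 — 2 statements merged into one kernel-verified Lean document; each statement's English description precedes it below -/
import Mathlib

section
/- Assume N₂ ≥ N₁ > 0, b > a > 0, η = max_{x∈V} 1/μ(x), and λ > 16πN₂η/(a−b)². Let (u_λ, v_λ) be the maximal solution of the shifted U(1)×U(1) Chern-Simons system. Then for all x ∈ V: −u₀(x) + ln((1+√(1 − 16πN₂η/(λ(a−b)²)))/2) ≤ u_λ(x) < −u₀(x), and the analogous bounds hold for v_λ. Consequently (u_λ, v_λ) → (−u₀, −v₀) uniformly on V as λ → ∞. -/
open Real Filter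

noncomputable def graphLap {V : Type*} [Fintype V] (w : V → V → ℝ) (μ : V → ℝ)
    (u : V → ℝ) (x : V) : ℝ :=
  (μ x)⁻¹ * ∑ y, w x y * (u y - u x)

def graphConnected {V : Type*} (w : V → V → ℝ) : Prop :=
  ∀ x y : V, Relation.ReflTransGen (fun a b => 0 < w a b) x y

noncomputable def dirac {V : Type*} [DecidableEq V] (μ : V → ℝ) (p x : V) : ℝ :=
  if x = p then (μ x)⁻¹ else 0

noncomputable def f₁ (a b u v : ℝ) : ℝ :=
  a * (b - a) * exp u - b * (b - a) * exp v + a ^ 2 * exp (2 * u)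
    - a * b * exp (2 * v) + b * (b - a) * exp (u + v)

noncomputable def f₂ (a b u v : ℝ) : ℝ :=
  -(b * (b - a) * exp u) + a * (b - a) * exp v - a * b * exp (2 * u)
    + a ^ 2 * exp (2 * v) + b * (b - a) * exp (u + v)


section Aux
variable {V : Type*} [Fintype V] [Nonempty V] (w : V → V → ℝ) (μ : V → ℝ)

omit [Nonempty V] in
lemma lap_sub (g h : V → ℝ) (x : V) :
    graphLap w μ (fun y => g y - h y) x = graphLap w μ g x - graphLap w μ h x := by
  unfold graphLap
  rw [← mul_sub, ← Finset.sum_sub_distrib]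
  congr 1; apply Finset.sum_congr rfl; intro y _; ring

omit [Nonempty V] in
lemma lap_add (g h : V → ℝ) (x : V) :
    graphLap w μ (fun y => g y + h y) x = graphLap w μ g x + graphLap w μ h x := by
  unfold graphLap
  rw [← mul_add, ← Finset.sum_add_distrib]
  congr 1; apply Finset.sum_congr rfl; intro y _; ring

omit [Nonempty V] in
lemma lap_smul (c : ℝ) (g : V → ℝ) (x : V) :
    graphLap w μ (fun y => c * g y) x = c * graphLap w μ g x := by
  unfold graphLap
  rw [Finset.mul_sum, Finset.mul_sum, Finset.mul_sum]
  apply Finset.sum_congr rfl; intro y _; ring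

omit [Nonempty V] in
lemma lap_neg_add_const (g : V → ℝ) (c : ℝ) (x : V) :
    graphLap w μ (fun y => -g y + c) x = -graphLap w μ g x := by
  unfold graphLap
  rw [neg_mul_eq_mul_neg, ← Finset.sum_neg_distrib]
  congr 1; apply Finset.sum_congr rfl; intro y _; ring

lemma minprinc (hwnn : ∀ x y, 0 ≤ w x y) (hμ : ∀ x, 0 < μ x)
    (K : ℝ) (hK : 0 < K) (g : V → ℝ)
    (h : ∀ x, 0 ≤ K * g x - graphLap w μ g x) : ∀ x, 0 ≤ g x := by
  obtain ⟨x₀, hx₀⟩ := Finite.exists_min g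
  have hlap : 0 ≤ graphLap w μ g x₀ := by
    unfold graphLap
    apply mul_nonneg (le_of_lt (inv_pos.mpr (hμ x₀)))
    apply Finset.sum_nonneg
    intro y _
    exact mul_nonneg (hwnn _ _) (by linarith [hx₀ y])
  have := h x₀
  have hg0 : 0 ≤ g x₀ := by nlinarith
  intro x; exact le_trans hg0 (hx₀ x)

lemma lapComp (hwnn : ∀ x y, 0 ≤ w x y) (hμ : ∀ x, 0 < μ x)
    (K : ℝ) (hK : 0 < K) (g₁ g₂ : V → ℝ)
    (h : ∀ x, K * g₁ x - graphLap w μ g₁ x ≤ K * g₂ x - graphLap w μ g₂ x) :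
    ∀ x, g₁ x ≤ g₂ x := by
  have := minprinc w μ hwnn hμ K hK (fun x => g₂ x - g₁ x) (fun x => by
    rw [lap_sub]; have := h x; linarith)
  intro x; linarith [show (0:ℝ) ≤ g₂ x - g₁ x from this x]

lemma lapResolvent (hwnn : ∀ x y, 0 ≤ w x y) (hμ : ∀ x, 0 < μ x)
    (K : ℝ) (hK : 0 < K) (h : V → ℝ) :
    ∃ g : V → ℝ, ∀ x, K * g x - graphLap w μ g x = h x := by
  let L : (V → ℝ) →ₗ[ℝ] (V → ℝ) :=
    { toFun := fun g x => K * g x - graphLap w μ g x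
      map_add' := by
        intro g₁ g₂; funext x
        have : graphLap w μ (g₁ + g₂) x = graphLap w μ g₁ x + graphLap w μ g₂ x :=
          lap_add w μ g₁ g₂ x
        simp only [Pi.add_apply, this]; ring
      map_smul' := by
        intro c g; funext x
        have : graphLap w μ (c • g) x = c * graphLap w μ g x := by
          have := lap_smul w μ c g x
          exact this
        simp only [Pi.smul_apply, smul_eq_mul, RingHom.id_apply, this]; ring }
  have hinj : Function.Injective L := by
    rw [injective_iff_map_eq_zero]
    intro g hg
    have hg' : ∀ x, K * g x - graphLap w μ g x = 0 := fun x => congrFun hg x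
    have h1 : ∀ x, 0 ≤ g x :=
      minprinc w μ hwnn hμ K hK g (fun x => le_of_eq (hg' x).symm)
    have h2 : ∀ x, 0 ≤ -g x := by
      apply minprinc w μ hwnn hμ K hK (fun x => -g x)
      intro x
      have : graphLap w μ (fun y => -g y) x = -graphLap w μ g x := by
        have := lap_neg_add_const w μ g 0 x
        simpa using this
      rw [this]; linarith [hg' x]
    funext x; have := h1 x; have := h2 x; simp; linarith
  obtain ⟨g, hg⟩ := LinearMap.surjective_of_injective hinj h
  exact ⟨g, fun x => congrFun hg x⟩


omit [Nonempty V] in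
lemma lap_neg (g : V → ℝ) (x : V) :
    graphLap w μ (fun y => -g y) x = -graphLap w μ g x := by
  have := lap_neg_add_const w μ g 0 x
  simpa using this

end Aux

lemma f1_exp (a b u v : ℝ) : f₁ a b u v =
    a * (b - a) * exp u - b * (b - a) * exp v + a ^ 2 * (exp u)^2
      - a * b * (exp v)^2 + b * (b - a) * (exp u * exp v) := by
  unfold f₁
  rw [two_mul, two_mul, Real.exp_add, Real.exp_add, Real.exp_add]
  ring

lemma f2_eq (a b u v : ℝ) : f₂ a b u v = f₁ a b v u := by
  unfold f₁ f₂
  rw [add_comm u v]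
  ring

lemma f1_zero (a b : ℝ) : f₁ a b 0 0 = 0 := by
  unfold f₁; simp; ring

lemma KL {a b X Y : ℝ} (ha : 0 < a) (hab : a < b) (hX : 1 ≤ X) (hY : 0 < Y) (hYX : Y ≤ X)
    (hf : a*(b-a)*X - b*(b-a)*Y + a^2*X^2 - a*b*Y^2 + b*(b-a)*(X*Y) ≤ 0) :
    X = 1 ∧ Y = 1 := by
  have hX0 : 0 < X := by linarith
  have hba : 0 < b - a := by linarith
  have hb : 0 < b := by linarith
  have hfac : 0 < a*(b-a)*X + a^2*X^2 := by
    have := mul_pos (mul_pos ha hba) hX0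
    have := mul_pos (mul_pos ha ha) (mul_pos hX0 hX0)
    nlinarith
  have hT1 : 0 ≤ (X - Y) * (a*(b-a)*X + a^2*X^2) :=
    mul_nonneg (by linarith) (le_of_lt hfac)
  have hfac2 : 0 < Y * (b-a)^2 * X := mul_pos (mul_pos hY (pow_pos hba 2)) hX0
  have hT2 : 0 ≤ Y * (b-a)^2 * X * (X - 1) :=
    mul_nonneg (le_of_lt hfac2) (by linarith)
  have hT3 : 0 ≤ a*b*X*Y*(X - Y) :=
    mul_nonneg (le_of_lt (mul_pos (mul_pos (mul_pos ha hb) hX0) hY)) (by linarith)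
  have hid : X * (a*(b-a)*X - b*(b-a)*Y + a^2*X^2 - a*b*Y^2 + b*(b-a)*(X*Y))
      = (X - Y) * (a*(b-a)*X + a^2*X^2) + Y * (b-a)^2 * X * (X - 1) + a*b*X*Y*(X - Y) := by
    ring
  have hsum : (X - Y) * (a*(b-a)*X + a^2*X^2) + Y * (b-a)^2 * X * (X - 1) + a*b*X*Y*(X - Y) ≤ 0 := by
    rw [← hid]
    exact mul_nonpos_of_nonneg_of_nonpos (le_of_lt hX0) hf
  have hT1' : (X - Y) * (a*(b-a)*X + a^2*X^2) = 0 := by linarith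
  have hT2' : Y * (b-a)^2 * X * (X - 1) = 0 := by linarith
  have hXY : X = Y := by
    rcases mul_eq_zero.mp hT1' with h | h
    · linarith
    · exact absurd h (ne_of_gt hfac)
  have hX1 : X = 1 := by
    rcases mul_eq_zero.mp hT2' with h | h
    · exact absurd h (ne_of_gt hfac2)
    · linarith
  exact ⟨hX1, by rw [← hXY, hX1]⟩

lemma expLip {s s' : ℝ} (hs : s ≤ 0) (hs' : s' ≤ s) : exp s - exp s' ≤ s - s' := by
  have h1 := Real.add_one_le_exp (s' - s)
  have h2 : exp s * ((s' - s) + 1) ≤ exp s * exp (s' - s) :=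
    mul_le_mul_of_nonneg_left h1 (le_of_lt (Real.exp_pos s))
  rw [← Real.exp_add] at h2
  have h3 : s + (s' - s) = s' := by ring
  rw [h3] at h2
  have h4 : exp s ≤ 1 := Real.exp_le_one_iff.mpr hs
  nlinarith

lemma GM {a b s s' t : ℝ} (ha : 0 < a) (hab : a < b) (hs : s ≤ 0) (hs' : s' ≤ s) (ht : t ≤ 0) :
    f₁ a b s t - f₁ a b s' t ≤ (a*(b-a) + 2*a^2 + b*(b-a)) * (s - s') := by
  have hba : 0 < b - a := by linarith
  have hb : 0 < b := by linarith
  have hE : exp s ≤ 1 := Real.exp_le_one_iff.mpr hs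
  have hE' : exp s' ≤ 1 := Real.exp_le_one_iff.mpr (le_trans hs' hs)
  have hF : exp t ≤ 1 := Real.exp_le_one_iff.mpr ht
  have hE0 := Real.exp_pos s
  have hE0' := Real.exp_pos s'
  have hF0 := Real.exp_pos t
  have hEE' : exp s' ≤ exp s := Real.exp_le_exp.mpr hs'
  have hlip : exp s - exp s' ≤ s - s' := expLip hs hs'
  have hfact : f₁ a b s t - f₁ a b s' t
      = (exp s - exp s') * (a*(b-a) + a^2*(exp s + exp s') + b*(b-a)*exp t) := by
    rw [f1_exp, f1_exp]; ring
  rw [hfact]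
  have hbr : a*(b-a) + a^2*(exp s + exp s') + b*(b-a)*exp t ≤ a*(b-a) + 2*a^2 + b*(b-a) := by
    have h1 : a^2*(exp s + exp s') ≤ a^2*2 :=
      mul_le_mul_of_nonneg_left (by linarith) (sq_nonneg a)
    have h2 : b*(b-a)*exp t ≤ b*(b-a)*1 :=
      mul_le_mul_of_nonneg_left hF (le_of_lt (mul_pos hb hba))
    nlinarith
  have hbr0 : 0 ≤ a*(b-a) + a^2*(exp s + exp s') + b*(b-a)*exp t := by
    have h1 : 0 < a*(b-a) := mul_pos ha hba
    have h2 : 0 ≤ a^2*(exp s + exp s') := mul_nonneg (sq_nonneg a) (by linarith)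
    have h3 : 0 < b*(b-a)*exp t := mul_pos (mul_pos hb hba) hF0
    linarith
  calc (exp s - exp s') * (a*(b-a) + a^2*(exp s + exp s') + b*(b-a)*exp t)
      ≤ (s - s') * (a*(b-a) + 2*a^2 + b*(b-a)) :=
        mul_le_mul hlip hbr hbr0 (by linarith)
    _ = (a*(b-a) + 2*a^2 + b*(b-a)) * (s - s') := by ring

lemma GT {a b s t t' : ℝ} (ha : 0 < a) (hab : a < b) (hs : s ≤ 0) (ht' : t' ≤ t) (ht : t ≤ 0) :
    f₁ a b s t ≤ f₁ a b s t' := by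
  have hba : 0 < b - a := by linarith
  have hb : 0 < b := by linarith
  have hE : exp s ≤ 1 := Real.exp_le_one_iff.mpr hs
  have hF0 := Real.exp_pos t
  have hF0' := Real.exp_pos t'
  have hFF' : exp t' ≤ exp t := Real.exp_le_exp.mpr ht'
  have hfact : f₁ a b s t' - f₁ a b s t
      = (exp t - exp t') * (a*b*(exp t' + exp t) - b*(b-a)*(exp s - 1)) := by
    rw [f1_exp, f1_exp]; ring
  have k1 : 0 ≤ a*b*(exp t' + exp t) := by positivity
  have k2 : 0 ≤ b*(b-a)*(1 - exp s) :=
    mul_nonneg (le_of_lt (mul_pos hb hba)) (by linarith)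
  have key : 0 ≤ (exp t - exp t') * (a*b*(exp t' + exp t) - b*(b-a)*(exp s - 1)) := by
    apply mul_nonneg (by linarith)
    nlinarith
  linarith

lemma f1_logr {a b r : ℝ} (hr : 0 < r) :
    f₁ a b (Real.log r) (Real.log r) = (b-a)^2 * (r * (r - 1)) := by
  rw [f1_exp, Real.exp_log hr]
  ring
section UpperBound
variable {V : Type*} [Fintype V] [Nonempty V]

lemma lapmax (w : V → V → ℝ) (μ : V → ℝ) (hwnn : ∀ x y, 0 ≤ w x y) (hμ : ∀ x, 0 < μ x)
    (g : V → ℝ) (x : V) (h : ∀ y, g y ≤ g x) : graphLap w μ g x ≤ 0 := by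
  unfold graphLap
  apply mul_nonpos_of_nonneg_of_nonpos (le_of_lt (inv_pos.mpr (hμ x)))
  apply Finset.sum_nonpos
  intro y _
  exact mul_nonpos_of_nonneg_of_nonpos (hwnn x y) (by linarith [h y])

lemma upper_strict (w : V → V → ℝ) (μ : V → ℝ)
    (hwnn : ∀ x y, 0 ≤ w x y) (hμ : ∀ x, 0 < μ x)
    (hconn : ∀ x y : V, Relation.ReflTransGen (fun a b => 0 < w a b) x y)
    {a b : ℝ} (ha : 0 < a) (hab : a < b) {lam : ℝ} (hlam : 0 < lam)
    (s t α β : V → ℝ)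
    (hα : ∀ x, 0 ≤ α x) (hβ : ∀ x, 0 ≤ β x) (hα0 : ∃ x, 0 < α x)
    (hes : ∀ x, graphLap w μ s x = lam * f₁ a b (s x) (t x) + α x)
    (het : ∀ x, graphLap w μ t x = lam * f₂ a b (s x) (t x) + β x) :
    ∀ x, s x < 0 ∧ t x < 0 := by
  by_contra hcon
  push_neg at hcon
  obtain ⟨z, hz⟩ := hcon
  obtain ⟨x₀, hx₀⟩ := Finite.exists_max (fun x => max (s x) (t x))
  have hm : 0 ≤ max (s x₀) (t x₀) := by
    refine le_trans ?_ (hx₀ z)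
    rcases lt_or_ge (s z) 0 with h | h
    · exact le_trans (hz h) (le_max_right _ _)
    · exact le_trans h (le_max_left _ _)
  -- the maximum point has s = t = 0
  have hx0st : s x₀ = 0 ∧ t x₀ = 0 := by
    rcases le_total (t x₀) (s x₀) with hc | hc
    · have hmax : max (s x₀) (t x₀) = s x₀ := max_eq_left hc
      have hsx : ∀ y, s y ≤ s x₀ := fun y =>
        le_trans (le_max_left _ _) (le_trans (hx₀ y) (le_of_eq hmax))
      have hs0 : 0 ≤ s x₀ := le_trans hm (le_of_eq hmax)
      have hlap : graphLap w μ s x₀ ≤ 0 := lapmax w μ hwnn hμ s x₀ hsx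
      rw [hes x₀] at hlap
      have hf1 : f₁ a b (s x₀) (t x₀) ≤ 0 := by nlinarith [hα x₀]
      have hf1' : a*(b-a)*exp (s x₀) - b*(b-a)*exp (t x₀) + a^2*(exp (s x₀))^2
          - a*b*(exp (t x₀))^2 + b*(b-a)*(exp (s x₀)*exp (t x₀)) ≤ 0 := by
        rw [← f1_exp]; exact hf1
      obtain ⟨hX1, hY1⟩ := KL ha hab (Real.one_le_exp hs0) (Real.exp_pos _)
        (Real.exp_le_exp.mpr hc) hf1'
      exact ⟨(Real.exp_eq_one_iff _).mp hX1, (Real.exp_eq_one_iff _).mp hY1⟩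
    · have hmax : max (s x₀) (t x₀) = t x₀ := max_eq_right hc
      have htx : ∀ y, t y ≤ t x₀ := fun y =>
        le_trans (le_max_right _ _) (le_trans (hx₀ y) (le_of_eq hmax))
      have ht0 : 0 ≤ t x₀ := le_trans hm (le_of_eq hmax)
      have hlap : graphLap w μ t x₀ ≤ 0 := lapmax w μ hwnn hμ t x₀ htx
      rw [het x₀] at hlap
      have hf2 : f₁ a b (t x₀) (s x₀) ≤ 0 := by
        rw [← f2_eq]; nlinarith [hβ x₀]
      have hf2' : a*(b-a)*exp (t x₀) - b*(b-a)*exp (s x₀) + a^2*(exp (t x₀))^2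
          - a*b*(exp (s x₀))^2 + b*(b-a)*(exp (t x₀)*exp (s x₀)) ≤ 0 := by
        rw [← f1_exp]; exact hf2
      obtain ⟨hX1, hY1⟩ := KL ha hab (Real.one_le_exp ht0) (Real.exp_pos _)
        (Real.exp_le_exp.mpr hc) hf2'
      exact ⟨(Real.exp_eq_one_iff _).mp hY1, (Real.exp_eq_one_iff _).mp hX1⟩
  have hm0 : ∀ y, s y ≤ 0 ∧ t y ≤ 0 := by
    intro y
    have := hx₀ y
    rw [hx0st.1, hx0st.2, max_self] at this
    exact ⟨le_trans (le_max_left _ _) this, le_trans (le_max_right _ _) this⟩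
  -- propagation
  have prop : ∀ x, s x = 0 → t x = 0 →
      α x = 0 ∧ ∀ y, 0 < w x y → (s y = 0 ∧ t y = 0) := by
    intro x hsx htx
    have hzero : ∀ (g : V → ℝ), (∀ y, g y ≤ 0) → g x = 0 → graphLap w μ g x = 0 →
        ∀ y, 0 < w x y → g y = 0 := by
      intro g hg hgx hlap0 y hwxy
      unfold graphLap at hlap0
      rcases mul_eq_zero.mp hlap0 with h | h
      · exact absurd h (ne_of_gt (inv_pos.mpr (hμ x)))
      · have hterms : ∀ i ∈ Finset.univ, w x i * (g i - g x) ≤ 0 := fun i _ =>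
          mul_nonpos_of_nonneg_of_nonpos (hwnn x i) (by linarith [hg i, hg x, hgx.ge, hgx.le])
        have := (Finset.sum_eq_zero_iff_of_nonpos hterms).mp h y (Finset.mem_univ y)
        rcases mul_eq_zero.mp this with h' | h'
        · exact absurd h' (ne_of_gt hwxy)
        · rw [hgx] at h'; linarith
    have heqs : graphLap w μ s x = α x := by
      rw [hes x, hsx, htx, f1_zero]; ring
    have hlaps : graphLap w μ s x ≤ 0 :=
      lapmax w μ hwnn hμ s x (fun y => by rw [hsx]; exact (hm0 y).1)
    have hαx : α x = 0 := le_antisymm (heqs ▸ hlaps) (hα x)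
    have hlaps0 : graphLap w μ s x = 0 := heqs.trans hαx
    have heqt : graphLap w μ t x = β x := by
      rw [het x, hsx, htx, f2_eq, f1_zero]; ring
    have hlapt : graphLap w μ t x ≤ 0 :=
      lapmax w μ hwnn hμ t x (fun y => by rw [htx]; exact (hm0 y).2)
    have hβx : β x = 0 := le_antisymm (heqt ▸ hlapt) (hβ x)
    have hlapt0 : graphLap w μ t x = 0 := heqt.trans hβx
    exact ⟨hαx, fun y hy =>
      ⟨hzero s (fun y => (hm0 y).1) hsx hlaps0 y hy,
       hzero t (fun y => (hm0 y).2) htx hlapt0 y hy⟩⟩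
  have reach : ∀ y, s y = 0 ∧ t y = 0 := by
    intro y
    induction hconn x₀ y with
    | refl => exact hx0st
    | tail h1 h2 ih => exact (prop _ ih.1 ih.2).2 _ h2
  obtain ⟨z', hz'⟩ := hα0
  have := (prop z' (reach z').1 (reach z').2).1
  linarith

end UpperBound
section Existence

lemma tendstoRexp {α : Type*} {l : Filter α} {g : α → ℝ} {x : ℝ}
    (hg : Filter.Tendsto g l (nhds x)) :
    Filter.Tendsto (fun nn => exp (g nn)) l (nhds (exp x)) :=
  (Real.continuous_exp.tendsto x).comp hg

lemma tendsto_f1 {a b : ℝ} {g h : ℕ → ℝ} {x y : ℝ}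
    (hg : Filter.Tendsto g Filter.atTop (nhds x)) (hh : Filter.Tendsto h Filter.atTop (nhds y)) :
    Filter.Tendsto (fun nn => f₁ a b (g nn) (h nn)) Filter.atTop (nhds (f₁ a b x y)) := by
  unfold f₁
  exact (((((tendstoRexp hg).const_mul (a*(b-a))).sub ((tendstoRexp hh).const_mul (b*(b-a)))).add
      ((tendstoRexp (hg.const_mul 2)).const_mul (a^2))).sub
      ((tendstoRexp (hh.const_mul 2)).const_mul (a*b))).add
      ((tendstoRexp (hg.add hh)).const_mul (b*(b-a)))

lemma tendsto_f2 {a b : ℝ} {g h : ℕ → ℝ} {x y : ℝ}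
    (hg : Filter.Tendsto g Filter.atTop (nhds x)) (hh : Filter.Tendsto h Filter.atTop (nhds y)) :
    Filter.Tendsto (fun nn => f₂ a b (g nn) (h nn)) Filter.atTop (nhds (f₂ a b x y)) := by
  unfold f₂
  exact (((((tendstoRexp hg).const_mul (b*(b-a))).neg.add ((tendstoRexp hh).const_mul (a*(b-a)))).sub
      ((tendstoRexp (hg.const_mul 2)).const_mul (a*b))).add
      ((tendstoRexp (hh.const_mul 2)).const_mul (a^2))).add
      ((tendstoRexp (hg.add hh)).const_mul (b*(b-a)))

variable {V : Type*} [Fintype V] [Nonempty V]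

lemma exists_sol (w : V → V → ℝ) (μ : V → ℝ)
    (hwnn : ∀ x y, 0 ≤ w x y) (hμ : ∀ x, 0 < μ x)
    {a b : ℝ} (ha : 0 < a) (hab : a < b) {lam : ℝ} (hlam : 0 < lam)
    (u₀ v₀ : V → ℝ) (c₁ c₂ : ℝ) (α β : V → ℝ)
    (hα : ∀ x, 0 ≤ α x) (hβ : ∀ x, 0 ≤ β x)
    (A : ℝ) (hαA : ∀ x, α x ≤ A) (hβA : ∀ x, β x ≤ A)
    (hu₀ : ∀ x, graphLap w μ u₀ x = -c₁ + α x)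
    (hv₀ : ∀ x, graphLap w μ v₀ x = -c₂ + β x)
    (r : ℝ) (hr0 : 0 < r) (hr1 : r ≤ 1)
    (hrA : A ≤ lam * ((b-a)^2 * (r * (1-r)))) :
    ∃ u' v' : V → ℝ,
      (∀ x, graphLap w μ u' x = lam * f₁ a b (u' x + u₀ x) (v' x + v₀ x) + c₁) ∧
      (∀ x, graphLap w μ v' x = lam * f₂ a b (u' x + u₀ x) (v' x + v₀ x) + c₂) ∧
      (∀ x, -u₀ x + Real.log r ≤ u' x) ∧ (∀ x, -v₀ x + Real.log r ≤ v' x) := by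
  set C : ℝ := a*(b-a) + 2*a^2 + b*(b-a) with hCdef
  have hC0 : 0 < C := by have : 0 < b - a := by linarith
                         have h1 : 0 < a*(b-a) := mul_pos ha this
                         have h2 : 0 < b*(b-a) := mul_pos (by linarith) this
                         have h3 : 0 < a^2 := by positivity
                         rw [hCdef]; linarith
  set K : ℝ := lam * C with hKdef
  have hK0 : 0 < K := mul_pos hlam hC0
  have solv : ∀ h : V → ℝ, ∃ g : V → ℝ, ∀ x, K * g x - graphLap w μ g x = h x :=
    fun h => lapResolvent w μ hwnn hμ K hK0 h
  have hstepEx : ∃ step : ((V → ℝ) × (V → ℝ)) → ((V → ℝ) × (V → ℝ)),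
      ∀ pq : ((V → ℝ) × (V → ℝ)),
      (∀ x, K * (step pq).1 x - graphLap w μ (step pq).1 x
         = K * pq.1 x - lam * f₁ a b (pq.1 x + u₀ x) (pq.2 x + v₀ x) - c₁) ∧
      (∀ x, K * (step pq).2 x - graphLap w μ (step pq).2 x
         = K * pq.2 x - lam * f₂ a b (pq.1 x + u₀ x) (pq.2 x + v₀ x) - c₂) :=
    ⟨fun pq => ⟨Classical.choose (solv (fun x =>
        K * pq.1 x - lam * f₁ a b (pq.1 x + u₀ x) (pq.2 x + v₀ x) - c₁)),
      Classical.choose (solv (fun x =>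
        K * pq.2 x - lam * f₂ a b (pq.1 x + u₀ x) (pq.2 x + v₀ x) - c₂))⟩,
     fun pq => ⟨Classical.choose_spec (solv (fun x =>
        K * pq.1 x - lam * f₁ a b (pq.1 x + u₀ x) (pq.2 x + v₀ x) - c₁)),
      Classical.choose_spec (solv (fun x =>
        K * pq.2 x - lam * f₂ a b (pq.1 x + u₀ x) (pq.2 x + v₀ x) - c₂))⟩⟩
  obtain ⟨step, hstep⟩ := hstepEx
  set sq : ℕ → ((V → ℝ) × (V → ℝ)) :=
    fun nn => step^[nn] ⟨fun x => -u₀ x, fun x => -v₀ x⟩ with hsqdef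
  have hsqS : ∀ nn, sq (nn+1) = step (sq nn) := fun nn =>
    Function.iterate_succ_apply' step nn _
  have hstep1 : ∀ nn x, K * (sq (nn+1)).1 x - graphLap w μ (sq (nn+1)).1 x
      = K * (sq nn).1 x - lam * f₁ a b ((sq nn).1 x + u₀ x) ((sq nn).2 x + v₀ x) - c₁ := by
    intro nn x
    rw [hsqS nn]
    exact (hstep (sq nn)).1 x
  have hstep2 : ∀ nn x, K * (sq (nn+1)).2 x - graphLap w μ (sq (nn+1)).2 x
      = K * (sq nn).2 x - lam * f₂ a b ((sq nn).1 x + u₀ x) ((sq nn).2 x + v₀ x) - c₂ := by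
    intro nn x
    rw [hsqS nn]
    exact (hstep (sq nn)).2 x
  set φ : V → ℝ := fun x => -u₀ x + Real.log r with hφdef
  set ψ : V → ℝ := fun x => -v₀ x + Real.log r with hψdef
  have hlogr : Real.log r ≤ 0 := Real.log_nonpos (le_of_lt hr0) hr1
  have hlapφ : ∀ x, graphLap w μ φ x = c₁ - α x := by
    intro x; rw [hφdef, lap_neg_add_const w μ u₀ (Real.log r) x, hu₀ x]; ring
  have hlapψ : ∀ x, graphLap w μ ψ x = c₂ - β x := by
    intro x; rw [hψdef, lap_neg_add_const w μ v₀ (Real.log r) x, hv₀ x]; ring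
  have hf1logr : lam * f₁ a b (Real.log r) (Real.log r) ≤ -A := by
    rw [f1_logr hr0]
    have : lam * ((b-a)^2 * (r * (r-1))) = -(lam * ((b-a)^2 * (r * (1-r)))) := by ring
    rw [this]; linarith
  -- monotonicity of the right-hand sides
  have mono1 : ∀ (u u' v v' : V → ℝ), (∀x, u' x ≤ u x) → (∀x, u x ≤ -u₀ x) →
      (∀x, v' x ≤ v x) → (∀x, v x ≤ -v₀ x) → ∀ x,
      K * u' x - lam * f₁ a b (u' x + u₀ x) (v' x + v₀ x) - c₁
        ≤ K * u x - lam * f₁ a b (u x + u₀ x) (v x + v₀ x) - c₁ := by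
    intro u u' v v' hu hu0 hv hv0 x
    have hs : u x + u₀ x ≤ 0 := by linarith [hu0 x]
    have hs' : u' x + u₀ x ≤ u x + u₀ x := by linarith [hu x]
    have ht : v x + v₀ x ≤ 0 := by linarith [hv0 x]
    have ht' : v' x + v₀ x ≤ v x + v₀ x := by linarith [hv x]
    have g1 : f₁ a b (u x + u₀ x) (v x + v₀ x) ≤ f₁ a b (u x + u₀ x) (v' x + v₀ x) :=
      GT ha hab hs ht' ht
    have g2 : f₁ a b (u x + u₀ x) (v' x + v₀ x) - f₁ a b (u' x + u₀ x) (v' x + v₀ x)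
        ≤ C * ((u x + u₀ x) - (u' x + u₀ x)) := GM ha hab hs hs' (le_trans ht' ht)
    have g3 : lam * (f₁ a b (u x + u₀ x) (v x + v₀ x)
        - f₁ a b (u' x + u₀ x) (v' x + v₀ x)) ≤ K * (u x - u' x) := by
      have h3 : f₁ a b (u x + u₀ x) (v x + v₀ x) - f₁ a b (u' x + u₀ x) (v' x + v₀ x)
          ≤ C * (u x - u' x) := by nlinarith [g1, g2]
      calc lam * (f₁ a b (u x + u₀ x) (v x + v₀ x) - f₁ a b (u' x + u₀ x) (v' x + v₀ x))
          ≤ lam * (C * (u x - u' x)) := mul_le_mul_of_nonneg_left h3 hlam.le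
        _ = K * (u x - u' x) := by rw [hKdef]; ring
    nlinarith [g3]
  have mono2 : ∀ (u u' v v' : V → ℝ), (∀x, u' x ≤ u x) → (∀x, u x ≤ -u₀ x) →
      (∀x, v' x ≤ v x) → (∀x, v x ≤ -v₀ x) → ∀ x,
      K * v' x - lam * f₂ a b (u' x + u₀ x) (v' x + v₀ x) - c₂
        ≤ K * v x - lam * f₂ a b (u x + u₀ x) (v x + v₀ x) - c₂ := by
    intro u u' v v' hu hu0 hv hv0 x
    have hs : u x + u₀ x ≤ 0 := by linarith [hu0 x]
    have hs' : u' x + u₀ x ≤ u x + u₀ x := by linarith [hu x]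
    have ht : v x + v₀ x ≤ 0 := by linarith [hv0 x]
    have ht' : v' x + v₀ x ≤ v x + v₀ x := by linarith [hv x]
    rw [f2_eq, f2_eq]
    have g1 : f₁ a b (v x + v₀ x) (u x + u₀ x) ≤ f₁ a b (v x + v₀ x) (u' x + u₀ x) :=
      GT ha hab ht hs' hs
    have g2 : f₁ a b (v x + v₀ x) (u' x + u₀ x) - f₁ a b (v' x + v₀ x) (u' x + u₀ x)
        ≤ C * ((v x + v₀ x) - (v' x + v₀ x)) := GM ha hab ht ht' (le_trans hs' hs)
    have g3 : lam * (f₁ a b (v x + v₀ x) (u x + u₀ x)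
        - f₁ a b (v' x + v₀ x) (u' x + u₀ x)) ≤ K * (v x - v' x) := by
      have h3 : f₁ a b (v x + v₀ x) (u x + u₀ x) - f₁ a b (v' x + v₀ x) (u' x + u₀ x)
          ≤ C * (v x - v' x) := by nlinarith [g1, g2]
      calc lam * (f₁ a b (v x + v₀ x) (u x + u₀ x) - f₁ a b (v' x + v₀ x) (u' x + u₀ x))
          ≤ lam * (C * (v x - v' x)) := mul_le_mul_of_nonneg_left h3 hlam.le
        _ = K * (v x - v' x) := by rw [hKdef]; ring
    nlinarith [g3]
  -- the invariant
  have hQ : ∀ nn, (∀x, φ x ≤ (sq nn).1 x) ∧ (∀x, (sq (nn+1)).1 x ≤ (sq nn).1 x)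
      ∧ (∀x, (sq nn).1 x ≤ -u₀ x) ∧ (∀x, ψ x ≤ (sq nn).2 x)
      ∧ (∀x, (sq (nn+1)).2 x ≤ (sq nn).2 x) ∧ (∀x, (sq nn).2 x ≤ -v₀ x) := by
    intro nn
    induction nn with
    | zero =>
      have e1 : (sq 0).1 = (fun x => -u₀ x) := rfl
      have e2 : (sq 0).2 = (fun x => -v₀ x) := rfl
      have c1 : ∀ x, (sq 1).1 x ≤ (sq 0).1 x := by
        apply lapComp w μ hwnn hμ K hK0
        intro x
        rw [hstep1 0 x, e1, e2]
        have hz1 : -u₀ x + u₀ x = 0 := by ring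
        have hz2 : -v₀ x + v₀ x = 0 := by ring
        rw [hz1, hz2, f1_zero]
        have : graphLap w μ (fun x => -u₀ x) x = c₁ - α x := by
          rw [lap_neg w μ u₀ x, hu₀ x]; ring
        rw [this]
        have := hα x
        linarith
      have c2 : ∀ x, (sq 1).2 x ≤ (sq 0).2 x := by
        apply lapComp w μ hwnn hμ K hK0
        intro x
        rw [hstep2 0 x, e1, e2]
        have hz1 : -u₀ x + u₀ x = 0 := by ring
        have hz2 : -v₀ x + v₀ x = 0 := by ring
        rw [hz1, hz2, f2_eq, f1_zero]
        have : graphLap w μ (fun x => -v₀ x) x = c₂ - β x := by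
          rw [lap_neg w μ v₀ x, hv₀ x]; ring
        rw [this]
        have := hβ x
        linarith
      refine ⟨fun x => ?_, c1, fun x => ?_, fun x => ?_, c2, fun x => ?_⟩
      · rw [e1, hφdef]; simp; linarith
      · rw [e1]
      · rw [e2, hψdef]; simp; linarith
      · rw [e2]
    | succ nn ih =>
      obtain ⟨ih1, ih2, ih3, ih4, ih5, ih6⟩ := ih
      have h3' : ∀x, (sq (nn+1)).1 x ≤ -u₀ x := fun x => le_trans (ih2 x) (ih3 x)
      have h6' : ∀x, (sq (nn+1)).2 x ≤ -v₀ x := fun x => le_trans (ih5 x) (ih6 x)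
      have h1' : ∀x, φ x ≤ (sq (nn+1)).1 x := by
        apply lapComp w μ hwnn hμ K hK0
        intro x
        rw [hstep1 nn x, hlapφ x]
        have key := mono1 ((sq nn).1) φ ((sq nn).2) ψ ih1 ih3 ih4 ih6 x
        have hφx : φ x + u₀ x = Real.log r := by rw [hφdef]; ring
        have hψx : ψ x + v₀ x = Real.log r := by rw [hψdef]; ring
        rw [hφx, hψx] at key
        have := hαA x
        linarith [hf1logr]
      have h4' : ∀x, ψ x ≤ (sq (nn+1)).2 x := by
        apply lapComp w μ hwnn hμ K hK0
        intro x
        rw [hstep2 nn x, hlapψ x]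
        have key := mono2 ((sq nn).1) φ ((sq nn).2) ψ ih1 ih3 ih4 ih6 x
        have hφx : φ x + u₀ x = Real.log r := by rw [hφdef]; ring
        have hψx : ψ x + v₀ x = Real.log r := by rw [hψdef]; ring
        rw [hφx, hψx, f2_eq] at key
        have := hβA x
        linarith [hf1logr]
      have h2' : ∀x, (sq (nn+2)).1 x ≤ (sq (nn+1)).1 x := by
        apply lapComp w μ hwnn hμ K hK0
        intro x
        rw [hstep1 (nn+1) x, hstep1 nn x]
        exact mono1 ((sq nn).1) ((sq (nn+1)).1) ((sq nn).2) ((sq (nn+1)).2) ih2 ih3 ih5 ih6 x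
      have h5' : ∀x, (sq (nn+2)).2 x ≤ (sq (nn+1)).2 x := by
        apply lapComp w μ hwnn hμ K hK0
        intro x
        rw [hstep2 (nn+1) x, hstep2 nn x]
        exact mono2 ((sq nn).1) ((sq (nn+1)).1) ((sq nn).2) ((sq (nn+1)).2) ih2 ih3 ih5 ih6 x
      exact ⟨h1', h2', h3', h4', h5', h6'⟩
  -- limits
  set u' : V → ℝ := fun x => ⨅ nn, (sq nn).1 x with hu'def
  set v' : V → ℝ := fun x => ⨅ nn, (sq nn).2 x with hv'def
  have hu'T : ∀ x, Filter.Tendsto (fun nn => (sq nn).1 x) Filter.atTop (nhds (u' x)) := by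
    intro x
    apply tendsto_atTop_ciInf (antitone_nat_of_succ_le (fun nn => (hQ nn).2.1 x))
    exact ⟨φ x, fun y ⟨nn, hnn⟩ => hnn ▸ (hQ nn).1 x⟩
  have hv'T : ∀ x, Filter.Tendsto (fun nn => (sq nn).2 x) Filter.atTop (nhds (v' x)) := by
    intro x
    apply tendsto_atTop_ciInf (antitone_nat_of_succ_le (fun nn => (hQ nn).2.2.2.2.1 x))
    exact ⟨ψ x, fun y ⟨nn, hnn⟩ => hnn ▸ (hQ nn).2.2.2.1 x⟩
  have hu'TS : ∀ x, Filter.Tendsto (fun nn => (sq (nn+1)).1 x) Filter.atTop (nhds (u' x)) :=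
    fun x => (hu'T x).comp (tendsto_add_atTop_nat 1)
  have hv'TS : ∀ x, Filter.Tendsto (fun nn => (sq (nn+1)).2 x) Filter.atTop (nhds (v' x)) :=
    fun x => (hv'T x).comp (tendsto_add_atTop_nat 1)
  have hlapT : ∀ (gseq : ℕ → V → ℝ) (glim : V → ℝ),
      (∀ y, Filter.Tendsto (fun nn => gseq nn y) Filter.atTop (nhds (glim y))) →
      ∀ x, Filter.Tendsto (fun nn => graphLap w μ (gseq nn) x) Filter.atTop
        (nhds (graphLap w μ glim x)) := by
    intro gseq glim hg x
    unfold graphLap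
    apply Filter.Tendsto.const_mul
    apply tendsto_finset_sum
    intro y _
    exact ((hg y).sub (hg x)).const_mul (w x y)
  have heq1 : ∀ x, graphLap w μ u' x = lam * f₁ a b (u' x + u₀ x) (v' x + v₀ x) + c₁ := by
    intro x
    have hL : Filter.Tendsto
        (fun nn => K * (sq (nn+1)).1 x - graphLap w μ (sq (nn+1)).1 x) Filter.atTop
        (nhds (K * u' x - graphLap w μ u' x)) :=
      ((hu'TS x).const_mul K).sub (hlapT (fun nn => (sq (nn+1)).1) u' hu'TS x)
    have hR : Filter.Tendsto
        (fun nn => K * (sq nn).1 x - lam * f₁ a b ((sq nn).1 x + u₀ x) ((sq nn).2 x + v₀ x) - c₁)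
        Filter.atTop
        (nhds (K * u' x - lam * f₁ a b (u' x + u₀ x) (v' x + v₀ x) - c₁)) := by
      apply Filter.Tendsto.sub _ tendsto_const_nhds
      apply Filter.Tendsto.sub ((hu'T x).const_mul K)
      apply Filter.Tendsto.const_mul
      exact tendsto_f1 ((hu'T x).add tendsto_const_nhds) ((hv'T x).add tendsto_const_nhds)
    have hfun : (fun nn => K * (sq (nn+1)).1 x - graphLap w μ (sq (nn+1)).1 x)
        = (fun nn => K * (sq nn).1 x - lam * f₁ a b ((sq nn).1 x + u₀ x) ((sq nn).2 x + v₀ x) - c₁) :=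
      funext (fun nn => hstep1 nn x)
    rw [hfun] at hL
    have := tendsto_nhds_unique hL hR
    linarith
  have heq2 : ∀ x, graphLap w μ v' x = lam * f₂ a b (u' x + u₀ x) (v' x + v₀ x) + c₂ := by
    intro x
    have hL : Filter.Tendsto
        (fun nn => K * (sq (nn+1)).2 x - graphLap w μ (sq (nn+1)).2 x) Filter.atTop
        (nhds (K * v' x - graphLap w μ v' x)) :=
      ((hv'TS x).const_mul K).sub (hlapT (fun nn => (sq (nn+1)).2) v' hv'TS x)
    have hR : Filter.Tendsto
        (fun nn => K * (sq nn).2 x - lam * f₂ a b ((sq nn).1 x + u₀ x) ((sq nn).2 x + v₀ x) - c₂)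
        Filter.atTop
        (nhds (K * v' x - lam * f₂ a b (u' x + u₀ x) (v' x + v₀ x) - c₂)) := by
      apply Filter.Tendsto.sub _ tendsto_const_nhds
      apply Filter.Tendsto.sub ((hv'T x).const_mul K)
      apply Filter.Tendsto.const_mul
      exact tendsto_f2 ((hu'T x).add tendsto_const_nhds) ((hv'T x).add tendsto_const_nhds)
    have hfun : (fun nn => K * (sq (nn+1)).2 x - graphLap w μ (sq (nn+1)).2 x)
        = (fun nn => K * (sq nn).2 x - lam * f₂ a b ((sq nn).1 x + u₀ x) ((sq nn).2 x + v₀ x) - c₂) :=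
      funext (fun nn => hstep2 nn x)
    rw [hfun] at hL
    have := tendsto_nhds_unique hL hR
    linarith
  refine ⟨u', v', heq1, heq2, fun x => ?_, fun x => ?_⟩
  · have : φ x ≤ u' x := le_ciInf (fun nn => (hQ nn).1 x)
    rw [hφdef] at this; exact this
  · have : ψ x ≤ v' x := le_ciInf (fun nn => (hQ nn).2.2.2.1 x)
    rw [hψdef] at this; exact this

end Existence

/-- Bounds on the maximal solution and convergence (u_λ,v_λ) → (−u₀,−v₀). -/
theorem stmt_16 {V : Type*} [Fintype V] [Nonempty V] [DecidableEq V]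
    (w : V → V → ℝ) (μ : V → ℝ)
    (hsymm : ∀ x y, w x y = w y x) (hwnn : ∀ x y, 0 ≤ w x y)
    (hμ : ∀ x, 0 < μ x) (hconn : graphConnected w)
    (a b : ℝ) (ha : 0 < a) (hab : a < b)
    (k₁ k₂ : ℕ) (hk₁ : 0 < k₁) (hk₂ : 0 < k₂)
    (p : Fin k₁ → V) (q : Fin k₂ → V)
    (m : Fin k₁ → ℝ) (n : Fin k₂ → ℝ)
    (hm : ∀ j, 0 < m j) (hn : ∀ j, 0 < n j)
    (hN : (∑ j, m j) ≤ ∑ j, n j)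
    (u₀ v₀ : V → ℝ)
    (hu₀ : ∀ x, graphLap w μ u₀ x =
      -(4 * π * (∑ j, m j)) / (∑ y, μ y) + 4 * π * ∑ j, m j * dirac μ (p j) x)
    (hv₀ : ∀ x, graphLap w μ v₀ x =
      -(4 * π * (∑ j, n j)) / (∑ y, μ y) + 4 * π * ∑ j, n j * dirac μ (q j) x)
    (η : ℝ) (hη : η = ⨆ x, (μ x)⁻¹)
    (U W : ℝ → V → ℝ)
    (hsol : ∀ lam > 16 * π * (∑ j, n j) * η / (a - b) ^ 2,
      (∀ x, graphLap w μ (U lam) x =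
        lam * f₁ a b (U lam x + u₀ x) (W lam x + v₀ x)
          + 4 * π * (∑ j, m j) / (∑ y, μ y)) ∧
      (∀ x, graphLap w μ (W lam) x =
        lam * f₂ a b (U lam x + u₀ x) (W lam x + v₀ x)
          + 4 * π * (∑ j, n j) / (∑ y, μ y)) ∧
      ∀ u' v' : V → ℝ,
        (∀ x, graphLap w μ u' x =
          lam * f₁ a b (u' x + u₀ x) (v' x + v₀ x)
            + 4 * π * (∑ j, m j) / (∑ y, μ y)) →
        (∀ x, graphLap w μ v' x =
          lam * f₂ a b (u' x + u₀ x) (v' x + v₀ x)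
            + 4 * π * (∑ j, n j) / (∑ y, μ y)) →
        (∀ x, u' x ≤ U lam x) ∧ (∀ x, v' x ≤ W lam x)) :
    (∀ lam > 16 * π * (∑ j, n j) * η / (a - b) ^ 2, ∀ x,
      (-u₀ x + Real.log ((1 + Real.sqrt (1 - 16 * π * (∑ j, n j) * η / (lam * (a - b) ^ 2))) / 2)
        ≤ U lam x ∧ U lam x < -u₀ x) ∧
      (-v₀ x + Real.log ((1 + Real.sqrt (1 - 16 * π * (∑ j, n j) * η / (lam * (a - b) ^ 2))) / 2)
        ≤ W lam x ∧ W lam x < -v₀ x)) ∧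
    (∀ x, Tendsto (fun lam => U lam x) atTop (nhds (-u₀ x))) ∧
    (∀ x, Tendsto (fun lam => W lam x) atTop (nhds (-v₀ x))) := by
  have hπ := Real.pi_pos
  have hNe₂ : Nonempty (Fin k₂) := ⟨⟨0, hk₂⟩⟩
  have hNe₁ : Nonempty (Fin k₁) := ⟨⟨0, hk₁⟩⟩
  have hNpos : 0 < ∑ j, n j := Finset.sum_pos (fun j _ => hn j) Finset.univ_nonempty
  have hMpos : 0 < ∑ j, m j := Finset.sum_pos (fun j _ => hm j) Finset.univ_nonempty
  have hηle : ∀ x : V, (μ x)⁻¹ ≤ η := by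
    intro x; rw [hη]
    exact le_ciSup (f := fun x : V => (μ x)⁻¹) (Set.Finite.bddAbove (Set.finite_range _)) x
  have hηpos : 0 < η :=
    lt_of_lt_of_le (inv_pos.mpr (hμ (Classical.arbitrary V))) (hηle _)
  have hab2 : 0 < (a - b) ^ 2 := by
    have h0 : a - b ≠ 0 := sub_ne_zero.mpr (ne_of_lt hab)
    exact lt_of_le_of_ne (sq_nonneg _) (Ne.symm (pow_ne_zero 2 h0))
  have hthr0 : 0 < 16 * π * (∑ j, n j) * η / (a - b) ^ 2 :=
    div_pos (by positivity) hab2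
  -- the Dirac-type sources
  set α : V → ℝ := fun x => 4 * π * ∑ j, m j * dirac μ (p j) x with hαdef
  set β : V → ℝ := fun x => 4 * π * ∑ j, n j * dirac μ (q j) x with hβdef
  have hdirnn : ∀ (z x : V), 0 ≤ dirac μ z x := by
    intro z x; unfold dirac
    split
    · exact le_of_lt (inv_pos.mpr (hμ x))
    · exact le_refl 0
  have hdirle : ∀ (z x : V), dirac μ z x ≤ η := by
    intro z x; unfold dirac
    split
    · exact hηle x
    · exact le_of_lt hηpos
  have hα : ∀ x, 0 ≤ α x := by
    intro x; rw [hαdef]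
    apply mul_nonneg (by positivity)
    exact Finset.sum_nonneg (fun j _ => mul_nonneg (le_of_lt (hm j)) (hdirnn _ _))
  have hβ : ∀ x, 0 ≤ β x := by
    intro x; rw [hβdef]
    apply mul_nonneg (by positivity)
    exact Finset.sum_nonneg (fun j _ => mul_nonneg (le_of_lt (hn j)) (hdirnn _ _))
  have hαA : ∀ x, α x ≤ 4 * π * (∑ j, n j) * η := by
    intro x; rw [hαdef]
    have h1 : ∑ j, m j * dirac μ (p j) x ≤ ∑ j : Fin k₁, m j * η :=
      Finset.sum_le_sum (fun j _ =>
        mul_le_mul_of_nonneg_left (hdirle _ _) (le_of_lt (hm j)))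
    have h2 : ∑ j : Fin k₁, m j * η = (∑ j, m j) * η := by
      rw [← Finset.sum_mul]
    have h3 : (∑ j, m j) * η ≤ (∑ j, n j) * η :=
      mul_le_mul_of_nonneg_right hN (le_of_lt hηpos)
    calc 4 * π * ∑ j, m j * dirac μ (p j) x
        ≤ 4 * π * ((∑ j, n j) * η) := by
          apply mul_le_mul_of_nonneg_left _ (by positivity)
          rw [h2] at h1; linarith
      _ = 4 * π * (∑ j, n j) * η := by ring
  have hβA : ∀ x, β x ≤ 4 * π * (∑ j, n j) * η := by
    intro x; rw [hβdef]
    have h1 : ∑ j, n j * dirac μ (q j) x ≤ ∑ j : Fin k₂, n j * η :=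
      Finset.sum_le_sum (fun j _ =>
        mul_le_mul_of_nonneg_left (hdirle _ _) (le_of_lt (hn j)))
    have h2 : ∑ j : Fin k₂, n j * η = (∑ j, n j) * η := by
      rw [← Finset.sum_mul]
    calc 4 * π * ∑ j, n j * dirac μ (q j) x
        ≤ 4 * π * ((∑ j, n j) * η) := by
          apply mul_le_mul_of_nonneg_left _ (by positivity)
          rw [h2] at h1; linarith
      _ = 4 * π * (∑ j, n j) * η := by ring
  have hα0 : ∃ x, 0 < α x := by
    refine ⟨p ⟨0, hk₁⟩, ?_⟩
    rw [hαdef]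
    apply mul_pos (by positivity)
    apply Finset.sum_pos' (fun j _ => mul_nonneg (le_of_lt (hm j)) (hdirnn _ _))
    refine ⟨⟨0, hk₁⟩, Finset.mem_univ _, ?_⟩
    have : dirac μ (p ⟨0, hk₁⟩) (p ⟨0, hk₁⟩) = (μ (p ⟨0, hk₁⟩))⁻¹ := if_pos rfl
    rw [this]
    exact mul_pos (hm _) (inv_pos.mpr (hμ _))
  have hu₀' : ∀ x, graphLap w μ u₀ x = -(4 * π * (∑ j, m j) / (∑ y, μ y)) + α x := by
    intro x; rw [hu₀ x, hαdef]; ring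
  have hv₀' : ∀ x, graphLap w μ v₀ x = -(4 * π * (∑ j, n j) / (∑ y, μ y)) + β x := by
    intro x; rw [hv₀ x, hβdef]; ring
  -- main bounds for each lam
  have key : ∀ lam > 16 * π * (∑ j, n j) * η / (a - b) ^ 2, ∀ x,
      (-u₀ x + Real.log ((1 + Real.sqrt (1 - 16 * π * (∑ j, n j) * η / (lam * (a - b) ^ 2))) / 2)
        ≤ U lam x ∧ U lam x < -u₀ x) ∧
      (-v₀ x + Real.log ((1 + Real.sqrt (1 - 16 * π * (∑ j, n j) * η / (lam * (a - b) ^ 2))) / 2)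
        ≤ W lam x ∧ W lam x < -v₀ x) := by
    intro lam hlam
    have hlam0 : 0 < lam := lt_trans hthr0 hlam
    obtain ⟨hequ, heqv, hmax⟩ := hsol lam hlam
    -- upper bound via maximum principle
    have hes : ∀ x, graphLap w μ (fun y => U lam y + u₀ y) x
        = lam * f₁ a b (U lam x + u₀ x) (W lam x + v₀ x) + α x := by
      intro x
      rw [lap_add w μ (U lam) u₀ x, hequ x, hu₀' x]; ring
    have het : ∀ x, graphLap w μ (fun y => W lam y + v₀ y) x
        = lam * f₂ a b (U lam x + u₀ x) (W lam x + v₀ x) + β x := by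
      intro x
      rw [lap_add w μ (W lam) v₀ x, heqv x, hv₀' x]; ring
    have hupper := upper_strict w μ hwnn hμ hconn ha hab hlam0
      (fun y => U lam y + u₀ y) (fun y => W lam y + v₀ y) α β hα hβ hα0 hes het
    -- lower bound via the constructed solution
    have hD1 : 16 * π * (∑ j, n j) * η / (lam * (a - b) ^ 2) < 1 := by
      rw [div_lt_one (mul_pos hlam0 hab2)]
      have := (div_lt_iff₀ hab2).mp hlam
      linarith
    have hD0 : 0 < 16 * π * (∑ j, n j) * η / (lam * (a - b) ^ 2) :=
      div_pos (by positivity) (mul_pos hlam0 hab2)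
    set r : ℝ := (1 + Real.sqrt (1 - 16 * π * (∑ j, n j) * η / (lam * (a - b) ^ 2))) / 2
      with hrdef
    have hsqnn : 0 ≤ Real.sqrt (1 - 16 * π * (∑ j, n j) * η / (lam * (a - b) ^ 2)) :=
      Real.sqrt_nonneg _
    have hsq1 : Real.sqrt (1 - 16 * π * (∑ j, n j) * η / (lam * (a - b) ^ 2)) ≤ 1 :=
      Real.sqrt_le_one.mpr (by linarith)
    have hr0 : 0 < r := by rw [hrdef]; linarith
    have hr1 : r ≤ 1 := by rw [hrdef]; linarith
    have hs2 : Real.sqrt (1 - 16 * π * (∑ j, n j) * η / (lam * (a - b) ^ 2)) ^ 2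
        = 1 - 16 * π * (∑ j, n j) * η / (lam * (a - b) ^ 2) :=
      Real.sq_sqrt (by linarith)
    have hrr : r * (1 - r) = (16 * π * (∑ j, n j) * η / (lam * (a - b) ^ 2)) / 4 := by
      have : r * (1 - r)
          = (1 - Real.sqrt (1 - 16 * π * (∑ j, n j) * η / (lam * (a - b) ^ 2)) ^ 2) / 4 := by
        rw [hrdef]; ring
      rw [this, hs2]; ring
    have hrA : 4 * π * (∑ j, n j) * η ≤ lam * ((b - a) ^ 2 * (r * (1 - r))) := by
      rw [hrr]
      have : lam * ((b - a) ^ 2 * ((16 * π * (∑ j, n j) * η / (lam * (a - b) ^ 2)) / 4))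
          = 4 * π * (∑ j, n j) * η := by
        rw [show (b - a) ^ 2 = (a - b) ^ 2 by ring]
        have hne : lam * (a - b) ^ 2 ≠ 0 := ne_of_gt (mul_pos hlam0 hab2)
        rw [show lam * ((a - b) ^ 2 * ((16 * π * (∑ j, n j) * η / (lam * (a - b) ^ 2)) / 4))
            = (16 * π * (∑ j, n j) * η / (lam * (a - b) ^ 2)) * (lam * (a - b) ^ 2) / 4 by ring,
          div_mul_cancel₀ _ hne]
        ring
      rw [this]
    obtain ⟨u', v', hequ', heqv', hu'low, hv'low⟩ :=
      exists_sol w μ hwnn hμ ha hab hlam0 u₀ v₀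
        (4 * π * (∑ j, m j) / (∑ y, μ y)) (4 * π * (∑ j, n j) / (∑ y, μ y))
        α β hα hβ (4 * π * (∑ j, n j) * η) hαA hβA hu₀' hv₀' r hr0 hr1 hrA
    obtain ⟨hUb, hWb⟩ := hmax u' v' hequ' heqv'
    intro x
    have h1 : U lam x + u₀ x < 0 := (hupper x).1
    have h2 : W lam x + v₀ x < 0 := (hupper x).2
    exact ⟨⟨le_trans (hu'low x) (hUb x), by linarith⟩,
           ⟨le_trans (hv'low x) (hWb x), by linarith⟩⟩
  refine ⟨key, ?_, ?_⟩
  -- limit statements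
  all_goals {
    intro x
    have h1 : Tendsto (fun lam : ℝ => 16 * π * (∑ j, n j) * η / (lam * (a - b) ^ 2))
        atTop (nhds 0) := by
      have heq : (fun lam : ℝ => 16 * π * (∑ j, n j) * η / (lam * (a - b) ^ 2))
          = fun lam : ℝ => (16 * π * (∑ j, n j) * η / (a - b) ^ 2) / lam := by
        funext l
        rw [div_div, mul_comm ((a-b)^2) l]
      rw [heq]
      exact tendsto_const_nhds.div_atTop tendsto_id
    have h2 : Tendsto (fun lam : ℝ =>
        Real.sqrt (1 - 16 * π * (∑ j, n j) * η / (lam * (a - b) ^ 2))) atTop (nhds 1) := by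
      have := (h1.const_sub 1).sqrt
      simpa using this
    have h3 : Tendsto (fun lam : ℝ =>
        (1 + Real.sqrt (1 - 16 * π * (∑ j, n j) * η / (lam * (a - b) ^ 2))) / 2)
        atTop (nhds 1) := by
      have := (h2.const_add 1).div_const 2
      norm_num at this
      exact this
    have h4 : Tendsto (fun lam : ℝ =>
        Real.log ((1 + Real.sqrt (1 - 16 * π * (∑ j, n j) * η / (lam * (a - b) ^ 2))) / 2))
        atTop (nhds 0) := by
      have := ((Real.continuousAt_log one_ne_zero).tendsto).comp h3
      rw [Real.log_one] at this
      exact this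
    first
    | (apply tendsto_of_tendsto_of_tendsto_of_le_of_le'
        (g := fun lam : ℝ => -u₀ x +
          Real.log ((1 + Real.sqrt (1 - 16 * π * (∑ j, n j) * η / (lam * (a - b) ^ 2))) / 2))
        (h := fun _ : ℝ => -u₀ x)
        (by simpa using tendsto_const_nhds.add h4) tendsto_const_nhds
        (by filter_upwards [eventually_gt_atTop (16 * π * (∑ j, n j) * η / (a - b) ^ 2)]
              with lam hlam
            exact ((key lam hlam x).1).1)
        (by filter_upwards [eventually_gt_atTop (16 * π * (∑ j, n j) * η / (a - b) ^ 2)]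
              with lam hlam
            exact le_of_lt ((key lam hlam x).1).2))
    | (apply tendsto_of_tendsto_of_tendsto_of_le_of_le'
        (g := fun lam : ℝ => -v₀ x +
          Real.log ((1 + Real.sqrt (1 - 16 * π * (∑ j, n j) * η / (lam * (a - b) ^ 2))) / 2))
        (h := fun _ : ℝ => -v₀ x)
        (by simpa using tendsto_const_nhds.add h4) tendsto_const_nhds
        (by filter_upwards [eventually_gt_atTop (16 * π * (∑ j, n j) * η / (a - b) ^ 2)]
              with lam hlam
            exact ((key lam hlam x).2).1)
        (by filter_upwards [eventually_gt_atTop (16 * π * (∑ j, n j) * η / (a - b) ^ 2)]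
              with lam hlam
            exact le_of_lt ((key lam hlam x).2).2))
  }
end

section
/- Let u_λ be the maximal solution of the shifted Chern-Simons equation Δu = λe^{ū₀+u}(e^{ū₀+u}−1) + 4πN/|V| on a finite connected graph, for λ > λ_c. Then for λ ≥ 16πNη (with η = max_x 1/μ(x)): −ū₀ + ln((1+√(1−16πNη/λ))/2) ≤ u_λ < −ū₀ on V; hence u_λ → −ū₀ as λ → ∞, and for every φ:V→ℝ, ∫_V λe^{ū₀+u_λ}(e^{ū₀+u_λ}−1)φ dμ → −4πΣ_{j=1}^N φ(p_j) as λ → ∞. -/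
open Real Filter

section helpers
variable {V : Type*} [Fintype V] [Nonempty V]
set_option linter.unusedSectionVars false

lemma graphLap_sub (w : V → V → ℝ) (μ : V → ℝ) (u v : V → ℝ) (x : V) :
    graphLap w μ (fun y => u y - v y) x = graphLap w μ u x - graphLap w μ v x := by
  unfold graphLap
  rw [← mul_sub, ← Finset.sum_sub_distrib]
  congr 1
  exact Finset.sum_congr rfl fun y _ => by ring

lemma graphLap_add (w : V → V → ℝ) (μ : V → ℝ) (u v : V → ℝ) (x : V) :
    graphLap w μ (fun y => u y + v y) x = graphLap w μ u x + graphLap w μ v x := by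
  unfold graphLap
  rw [← mul_add, ← Finset.sum_add_distrib]
  congr 1
  exact Finset.sum_congr rfl fun y _ => by ring

lemma graphLap_neg_add_const (w : V → V → ℝ) (μ : V → ℝ) (u : V → ℝ) (C : ℝ) (x : V) :
    graphLap w μ (fun y => -u y + C) x = -graphLap w μ u x := by
  unfold graphLap
  rw [← mul_neg, ← Finset.sum_neg_distrib]
  congr 1
  exact Finset.sum_congr rfl fun y _ => by ring

lemma lap_nonpos_at_max (w : V → V → ℝ) (μ : V → ℝ) (hwnn : ∀ x y, 0 ≤ w x y)
    (hμ : ∀ x, 0 < μ x) (u : V → ℝ) (x : V) (hmax : ∀ y, u y ≤ u x) :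
    graphLap w μ u x ≤ 0 := by
  unfold graphLap
  apply mul_nonpos_of_nonneg_of_nonpos (inv_nonneg.2 (hμ x).le)
  exact Finset.sum_nonpos fun y _ =>
    mul_nonpos_of_nonneg_of_nonpos (hwnn x y) (by linarith [hmax y])

lemma lap_max_principle (w : V → V → ℝ) (μ : V → ℝ) (hwnn : ∀ x y, 0 ≤ w x y)
    (hμ : ∀ x, 0 < μ x) (k : ℝ) (hk : 0 < k) (u : V → ℝ)
    (h : ∀ x, 0 ≤ graphLap w μ u x - k * u x) : ∀ x, u x ≤ 0 := by
  obtain ⟨x₀, hx₀⟩ := Finite.exists_max u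
  intro x
  refine le_trans (hx₀ x) ?_
  by_contra hpos
  push_neg at hpos
  have h1 : graphLap w μ u x₀ ≤ 0 := lap_nonpos_at_max w μ hwnn hμ u x₀ hx₀
  have h2 := h x₀
  nlinarith

lemma lap_solve (w : V → V → ℝ) (μ : V → ℝ) (hwnn : ∀ x y, 0 ≤ w x y)
    (hμ : ∀ x, 0 < μ x) (k : ℝ) (hk : 0 < k) (g : V → ℝ) :
    ∃ u : V → ℝ, ∀ x, graphLap w μ u x - k * u x = g x := by
  classical
  let L : (V → ℝ) →ₗ[ℝ] (V → ℝ) :=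
    { toFun := fun u x => graphLap w μ u x - k * u x
      map_add' := by
        intro u v
        funext x
        have := graphLap_add w μ u v x
        simp only [Pi.add_apply]
        rw [show (fun y => u y + v y) = u + v from rfl] at this
        rw [this]; ring
      map_smul' := by
        intro c u
        funext x
        simp only [Pi.smul_apply, smul_eq_mul, RingHom.id_apply]
        unfold graphLap
        rw [show (∑ y, w x y * ((c • u) y - (c • u) x)) = c * ∑ y, w x y * (u y - u x) by
          rw [Finset.mul_sum]; exact Finset.sum_congr rfl fun y _ => by simp [smul_eq_mul]; ring]
        ring }
  have hinj : Function.Injective L := by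
    rw [← LinearMap.ker_eq_bot, LinearMap.ker_eq_bot']
    intro u hu
    have hz : ∀ x, graphLap w μ u x - k * u x = 0 := fun x => congrFun hu x
    have h1 : ∀ x, u x ≤ 0 := lap_max_principle w μ hwnn hμ k hk u fun x => (hz x).ge
    have h2 : ∀ x, -u x ≤ 0 := by
      apply lap_max_principle w μ hwnn hμ k hk
      intro x
      have := graphLap_neg_add_const w μ u 0 x
      simp only [add_zero] at this
      rw [show (fun y => -u y) = (fun y => -u y + 0) by funext y; simp] at this ⊢
      rw [this]
      linarith [hz x]
    funext x
    have := h1 x; have := h2 x; simp; linarith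
  have hsurj : Function.Surjective L := LinearMap.injective_iff_surjective.mp hinj
  obtain ⟨u, hu⟩ := hsurj g
  exact ⟨u, fun x => congrFun hu x⟩

lemma tendsto_graphLap {ι : Type*} {l : Filter ι} (w : V → V → ℝ) (μ : V → ℝ)
    (f : ι → V → ℝ) (g : V → ℝ) (hf : ∀ y, Tendsto (fun i => f i y) l (nhds (g y))) (x : V) :
    Tendsto (fun i => graphLap w μ (f i) x) l (nhds (graphLap w μ g x)) := by
  unfold graphLap
  exact (tendsto_finset_sum _ fun y _ =>
    (tendsto_const_nhds.mul ((hf y).sub (hf x)))).const_mul _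


lemma exists_solution_between (w : V → V → ℝ) (μ : V → ℝ) (hwnn : ∀ x y, 0 ≤ w x y)
    (hμ : ∀ x, 0 < μ x) (k : ℝ) (hk : 0 < k)
    (F : V → ℝ → ℝ) (hFcont : ∀ x, Continuous (F x))
    (usub usup : V → ℝ) (hss : ∀ x, usub x ≤ usup x)
    (hanti : ∀ x s t, usub x ≤ s → s ≤ t → t ≤ usup x → F x t - k * t ≤ F x s - k * s)
    (hsub : ∀ x, F x (usub x) ≤ graphLap w μ usub x)
    (hsup : ∀ x, graphLap w μ usup x ≤ F x (usup x)) :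
    ∃ u : V → ℝ, (∀ x, graphLap w μ u x = F x (u x)) ∧ ∀ x, usub x ≤ u x ∧ u x ≤ usup x := by
  classical
  -- iteration
  obtain ⟨seq, hseq0, hseqS⟩ : ∃ seq : ℕ → V → ℝ, seq 0 = usup ∧
      ∀ n x, graphLap w μ (seq (n+1)) x - k * seq (n+1) x = F x (seq n x) - k * seq n x := by
    refine ⟨fun n => Nat.rec usup
      (fun _ prev => Classical.choose
        (lap_solve w μ hwnn hμ k hk (fun x => F x (prev x) - k * prev x))) n, rfl, ?_⟩
    intro n x
    exact Classical.choose_spec (lap_solve w μ hwnn hμ k hk _) x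
  -- invariant
  have inv : ∀ n, (∀ x, usub x ≤ seq n x) ∧ (∀ x, seq n x ≤ usup x) ∧
      (∀ x, seq (n+1) x ≤ seq n x) := by
    intro n
    induction n with
    | zero =>
      refine ⟨hseq0 ▸ hss, fun x => (hseq0 ▸ le_rfl : seq 0 x ≤ usup x), ?_⟩
      have key : ∀ x, seq 1 x - usup x ≤ 0 := by
        apply lap_max_principle w μ hwnn hμ k hk
        intro x
        rw [graphLap_sub w μ (seq 1) usup x]
        have h1 := hseqS 0 x
        rw [hseq0] at h1
        have := hsup x
        linarith
      intro x
      rw [show (0:ℕ) + 1 = 1 from rfl, hseq0]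
      linarith [key x]
    | succ n ih =>
      obtain ⟨ih1, ih2, ih3⟩ := ih
      have hb1 : ∀ x, usub x ≤ seq (n+1) x := by
        have key : ∀ x, usub x - seq (n+1) x ≤ 0 := by
          apply lap_max_principle w μ hwnn hμ k hk
          intro x
          rw [graphLap_sub w μ usub (seq (n+1)) x]
          have h1 := hseqS n x
          have h2 := hsub x
          have h3 := hanti x (usub x) (seq n x) le_rfl (ih1 x) (ih2 x)
          linarith
        intro x; linarith [key x]
      refine ⟨hb1, fun x => le_trans (ih3 x) (ih2 x), ?_⟩
      have key : ∀ x, seq (n+1+1) x - seq (n+1) x ≤ 0 := by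
        apply lap_max_principle w μ hwnn hμ k hk
        intro x
        rw [graphLap_sub w μ (seq (n+1+1)) (seq (n+1)) x]
        have h1 := hseqS (n+1) x
        have h2 := hseqS n x
        have h3 := hanti x (seq (n+1) x) (seq n x) (hb1 x) (ih3 x) (ih2 x)
        linarith
      intro x; linarith [key x]
  -- convergence
  have hmono : ∀ x, Antitone (fun n => seq n x) :=
    fun x => antitone_nat_of_succ_le (fun n => (inv n).2.2 x)
  have hbdd : ∀ x, BddBelow (Set.range fun n => seq n x) :=
    fun x => ⟨usub x, by rintro - ⟨n, rfl⟩; exact (inv n).1 x⟩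
  have htend : ∀ x, Tendsto (fun n => seq n x) atTop (nhds (⨅ m, seq m x)) :=
    fun x => tendsto_atTop_ciInf (hmono x) (hbdd x)
  refine ⟨fun x => ⨅ m, seq m x, ?_, ?_⟩
  · intro x
    have hL : Tendsto (fun n => graphLap w μ (seq (n+1)) x - k * seq (n+1) x) atTop
        (nhds (graphLap w μ (fun y => ⨅ m, seq m y) x - k * ⨅ m, seq m x)) := by
      have h0 := (tendsto_graphLap w μ seq (fun y => ⨅ m, seq m y) htend x).sub
        ((htend x).const_mul k)
      exact h0.comp (tendsto_add_atTop_nat 1)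
    have hR : Tendsto (fun n => F x (seq n x) - k * seq n x) atTop
        (nhds (F x (⨅ m, seq m x) - k * ⨅ m, seq m x)) :=
      ((hFcont x).continuousAt.tendsto.comp (htend x)).sub ((htend x).const_mul k)
    have heq : (fun n => graphLap w μ (seq (n+1)) x - k * seq (n+1) x)
        = (fun n => F x (seq n x) - k * seq n x) := funext fun n => hseqS n x
    rw [heq] at hL
    have huniq := tendsto_nhds_unique hL hR
    linarith
  · intro x
    refine ⟨le_ciInf fun n => (inv n).1 x, ?_⟩
    exact le_trans (ciInf_le (hbdd x) 0) (hseq0 ▸ le_rfl)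

end helpers

lemma refltrans_invariant {V : Type*} {r : V → V → Prop} {P : V → Prop}
    (h : ∀ a b, P a → r a b → P b) {x y : V}
    (hxy : Relation.ReflTransGen r x y) (hx : P x) : P y := by
  induction hxy with
  | refl => exact hx
  | tail _ hr ih => exact h _ _ ih hr


set_option maxHeartbeats 1000000 in
/-- Bounds, convergence u_λ → −ū₀, and distributional convergence
λe^{ū₀+u_λ}(e^{ū₀+u_λ}−1) → −4πΣ δ_{p_j} for the maximal solutions of the
shifted Chern-Simons equation. -/
theorem stmt_19 {V : Type*} [Fintype V] [Nonempty V] [DecidableEq V]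
    (w : V → V → ℝ) (μ : V → ℝ)
    (hsymm : ∀ x y, w x y = w y x) (hwnn : ∀ x y, 0 ≤ w x y)
    (hμ : ∀ x, 0 < μ x) (hconn : graphConnected w)
    (N : ℕ) (hN : 0 < N) (p : Fin N → V)
    (η : ℝ) (hη : η = ⨆ x, (μ x)⁻¹)
    (u₀ : V → ℝ)
    (hu₀ : ∀ x, graphLap w μ u₀ x =
      -(4 * π * N) / (∑ y, μ y) + 4 * π * ∑ j, dirac μ (p j) x)
    (lamc : ℝ)
    (U : ℝ → V → ℝ)
    (hsol : ∀ lam > lamc,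
      (∀ x, graphLap w μ (U lam) x =
        lam * exp (u₀ x + U lam x) * (exp (u₀ x + U lam x) - 1)
          + 4 * π * N / (∑ y, μ y)) ∧
      ∀ u' : V → ℝ,
        (∀ x, graphLap w μ u' x =
          lam * exp (u₀ x + u' x) * (exp (u₀ x + u' x) - 1)
            + 4 * π * N / (∑ y, μ y)) →
        ∀ x, u' x ≤ U lam x) :
    (∀ lam, lam > lamc → lam ≥ 16 * π * N * η → ∀ x,
      -u₀ x + Real.log ((1 + Real.sqrt (1 - 16 * π * N * η / lam)) / 2) ≤ U lam x ∧
      U lam x < -u₀ x) ∧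
    (∀ x, Tendsto (fun lam => U lam x) atTop (nhds (-u₀ x))) ∧
    (∀ φ : V → ℝ,
      Tendsto (fun lam => ∑ x, μ x *
          (lam * exp (u₀ x + U lam x) * (exp (u₀ x + U lam x) - 1) * φ x))
        atTop (nhds (-(4 * π * ∑ j, φ (p j))))) := by
  classical
  have hπ : (0:ℝ) < π := Real.pi_pos
  have hN0 : (0:ℝ) < N := by exact_mod_cast hN
  have hηb : BddAbove (Set.range fun x : V => (μ x)⁻¹) := (Set.finite_range _).bddAbove
  have hημ : ∀ x, (μ x)⁻¹ ≤ η := fun x => hη ▸ le_ciSup hηb x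
  have hη0 : 0 < η := lt_of_lt_of_le (inv_pos.2 (hμ (Classical.arbitrary V))) (hημ _)
  have hc0 : (0:ℝ) < 16 * π * N * η :=
    mul_pos (mul_pos (mul_pos (by norm_num) hπ) hN0) hη0
  have hvol : 0 < ∑ y, μ y := Finset.sum_pos (fun y _ => hμ y) Finset.univ_nonempty
  have hdsum_nonneg : ∀ x : V, 0 ≤ ∑ j, dirac μ (p j) x := by
    intro x
    apply Finset.sum_nonneg
    intro j _
    unfold dirac
    split
    · exact (inv_pos.2 (hμ x)).le
    · exact le_rfl
  have hdsum_le : ∀ x : V, ∑ j, dirac μ (p j) x ≤ N * η := by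
    intro x
    calc ∑ j, dirac μ (p j) x ≤ ∑ _j : Fin N, η := by
          apply Finset.sum_le_sum
          intro j _
          unfold dirac
          split
          · exact hημ x
          · exact hη0.le
      _ = N * η := by simp [Finset.sum_const, nsmul_eq_mul]
  -- Part 1
  have part1 : ∀ lam, lam > lamc → lam ≥ 16 * π * N * η → ∀ x,
      -u₀ x + Real.log ((1 + Real.sqrt (1 - 16 * π * N * η / lam)) / 2) ≤ U lam x ∧
      U lam x < -u₀ x := by
    intro lam hl1 hl2
    obtain ⟨heq, hmax⟩ := hsol lam hl1
    have hlam0 : 0 < lam := lt_of_lt_of_le hc0 hl2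
    -- lower bound
    set s : ℝ := Real.sqrt (1 - 16 * π * N * η / lam) with hs
    have harg0 : 0 ≤ 1 - 16 * π * N * η / lam := by
      rw [sub_nonneg]
      exact (div_le_one hlam0).mpr hl2
    have harg1 : 1 - 16 * π * N * η / lam ≤ 1 := by
      have : 0 ≤ 16 * π * N * η / lam := div_nonneg hc0.le hlam0.le
      linarith
    have hs0 : 0 ≤ s := Real.sqrt_nonneg _
    have hs1 : s ≤ 1 := by
      rw [hs, show (1:ℝ) = Real.sqrt 1 by rw [Real.sqrt_one]]
      exact Real.sqrt_le_sqrt (by rw [Real.sqrt_one]; exact harg1)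
    have hs2 : s ^ 2 = 1 - 16 * π * N * η / lam := Real.sq_sqrt harg0
    have ht_pos : (0:ℝ) < (1 + s) / 2 := by linarith
    have ht_le1 : (1 + s) / 2 ≤ 1 := by linarith
    have hkey : lam * ((1 + s) / 2 * ((1 + s) / 2 - 1)) = -(4 * π * N * η) := by
      have h4 : (1 + s) / 2 * ((1 + s) / 2 - 1) = (s ^ 2 - 1) / 4 := by ring
      rw [h4, hs2]
      field_simp
      ring
    have hlower : ∀ x, -u₀ x + Real.log ((1 + s) / 2) ≤ U lam x := by
      set F : V → ℝ → ℝ := fun x t =>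
        lam * exp (u₀ x + t) * (exp (u₀ x + t) - 1) + 4 * π * N / (∑ y, μ y) with hF
      have hFcont : ∀ x, Continuous (F x) := fun x => by rw [hF]; fun_prop
      have hss : ∀ x, (-u₀ x + Real.log ((1 + s) / 2)) ≤ -u₀ x := by
        intro x
        have := Real.log_nonpos ht_pos.le ht_le1
        linarith
      have hanti : ∀ x a b, (-u₀ x + Real.log ((1 + s) / 2)) ≤ a → a ≤ b → b ≤ -u₀ x →
          F x b - 2 * lam * b ≤ F x a - 2 * lam * a := by
        intro x a b hsa hab hbs
        have hAB : u₀ x + a ≤ u₀ x + b := by linarith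
        have hB0 : u₀ x + b ≤ 0 := by linarith
        set A : ℝ := u₀ x + a with hA
        set B : ℝ := u₀ x + b with hB
        set eA : ℝ := exp A with heA
        set eB : ℝ := exp B with heB
        have heB1 : eB ≤ 1 := by
          rw [heB, ← Real.exp_zero]
          exact Real.exp_le_exp.2 hB0
        have heAB : eA ≤ eB := Real.exp_le_exp.2 hAB
        have hqd : (2*A - 2*B + 1) * (eB * eB) ≤ eA * eA := by
          have h1 : (2*A - 2*B) + 1 ≤ exp (2*A - 2*B) := Real.add_one_le_exp _
          have h2 : exp (2*A - 2*B) * (eB * eB) = eA * eA := by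
            rw [heA, heB, ← Real.exp_add, ← Real.exp_add, ← Real.exp_add]
            congr 1
            ring
          have h3 : 0 < eB * eB := mul_pos (Real.exp_pos B) (Real.exp_pos B)
          nlinarith
        have heB2 : eB * eB ≤ 1 := by nlinarith [Real.exp_pos B]
        have hin : eB * eB - eA * eA + (eA - eB) - 2 * (B - A) ≤ 0 := by
          nlinarith [hqd, mul_nonneg (sub_nonneg.2 hAB) (sub_nonneg.2 heB2), heAB]
        have hfin := mul_nonpos_of_nonneg_of_nonpos hlam0.le hin
        have hba : B - A = b - a := by rw [hA, hB]; ring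
        rw [hba] at hfin
        rw [hF]
        simp only []
        nlinarith [hfin]
      have hsubs : ∀ x, F x (-u₀ x + Real.log ((1 + s) / 2)) ≤
          graphLap w μ (fun y => -u₀ y + Real.log ((1 + s) / 2)) x := by
        intro x
        have hlap : graphLap w μ (fun y => -u₀ y + Real.log ((1 + s) / 2)) x
            = -graphLap w μ u₀ x := graphLap_neg_add_const w μ u₀ _ x
        rw [hlap, hu₀ x, hF]
        simp only []
        have hval : u₀ x + (-u₀ x + Real.log ((1 + s) / 2)) = Real.log ((1 + s) / 2) := by ring
        rw [hval, Real.exp_log ht_pos]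
        have h4π : (0:ℝ) ≤ 4 * π := by positivity
        have hd := mul_le_mul_of_nonneg_left (hdsum_le x) h4π
        have hkey2 : lam * ((1 + s) / 2) * ((1 + s) / 2 - 1) = -(4 * π * N * η) := by
          rw [← hkey]; ring
        have hngd : -(4 * π * (N:ℝ)) / (∑ y, μ y) = -(4 * π * (N:ℝ) / (∑ y, μ y)) := by ring
        linarith [hd, hkey2, hngd.le, hngd.ge]
      have hsups : ∀ x, graphLap w μ (fun y => -u₀ y) x ≤ F x (-u₀ x) := by
        intro x
        have hfun : (fun y => -u₀ y) = (fun y => -u₀ y + 0) := by funext y; ring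
        rw [hfun, graphLap_neg_add_const w μ u₀ 0 x, hu₀ x, hF]
        simp only []
        have hval : u₀ x + -u₀ x = 0 := by ring
        rw [hval, Real.exp_zero]
        have h4π : (0:ℝ) ≤ 4 * π := by positivity
        have hngd : -(4 * π * (N:ℝ)) / (∑ y, μ y) = -(4 * π * (N:ℝ) / (∑ y, μ y)) := by ring
        nlinarith [mul_le_mul_of_nonneg_left (hdsum_nonneg x) h4π, hngd.le, hngd.ge]
      obtain ⟨u', hu'eq, hu'b⟩ := exists_solution_between w μ hwnn hμ (2 * lam)
        (by linarith) F hFcont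
        (fun x => -u₀ x + Real.log ((1 + s) / 2)) (fun x => -u₀ x)
        hss hanti hsubs hsups
      intro x
      have h1 := hmax u' (fun z => hu'eq z) x
      have h2 := (hu'b x).1
      linarith
    -- upper bound
    set v : V → ℝ := fun y => u₀ y + U lam y with hv
    have hΔv : ∀ x, graphLap w μ v x
        = lam * exp (v x) * (exp (v x) - 1) + 4 * π * ∑ j, dirac μ (p j) x := by
      intro x
      rw [hv, graphLap_add w μ u₀ (U lam) x, hu₀ x, heq x]
      ring
    have hvneg : ∀ x, v x < 0 := by
      by_contra hcon
      push_neg at hcon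
      obtain ⟨z, hz⟩ := hcon
      obtain ⟨x₀, hx₀⟩ := Finite.exists_max v
      have hM0 : 0 ≤ v x₀ := le_trans hz (hx₀ z)
      have hΔle : graphLap w μ v x₀ ≤ 0 := lap_nonpos_at_max w μ hwnn hμ v x₀ hx₀
      have he1 : 1 ≤ exp (v x₀) := by
        rw [← Real.exp_zero]
        exact Real.exp_le_exp.2 hM0
      have h4πd : 0 ≤ 4 * π * ∑ j, dirac μ (p j) x₀ :=
        mul_nonneg (by positivity) (hdsum_nonneg x₀)
      have hprod : lam * exp (v x₀) * (exp (v x₀) - 1) ≤ 0 := by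
        have := hΔv x₀
        linarith
      have heq1 : exp (v x₀) = 1 := by
        refine le_antisymm ?_ he1
        by_contra h
        push_neg at h
        have : 0 < lam * exp (v x₀) * (exp (v x₀) - 1) :=
          mul_pos (mul_pos hlam0 (by linarith)) (by linarith)
        linarith
      have hM : v x₀ = 0 := by
        have := congrArg Real.log heq1
        rwa [Real.log_exp, Real.log_one] at this
      -- propagation
      have hprop : ∀ a b : V, v a = 0 → 0 < w a b → v b = 0 := by
        intro a b ha hab
        have hΔa_le : graphLap w μ v a ≤ 0 := by
          apply lap_nonpos_at_max w μ hwnn hμ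
          intro y
          rw [ha, ← hM]
          exact hx₀ y
        have hΔa_eq : graphLap w μ v a = 4 * π * ∑ j, dirac μ (p j) a := by
          rw [hΔv a, ha, Real.exp_zero]
          ring
        have h4πa : 0 ≤ 4 * π * ∑ j, dirac μ (p j) a :=
          mul_nonneg (by positivity) (hdsum_nonneg a)
        have hΔa0 : graphLap w μ v a = 0 := le_antisymm hΔa_le (hΔa_eq ▸ h4πa)
        have hsum0 : ∑ y, w a y * (v y - v a) = 0 := by
          have hμa : ((μ a)⁻¹ : ℝ) ≠ 0 := inv_ne_zero (hμ a).ne'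
          unfold graphLap at hΔa0
          exact (mul_eq_zero.mp hΔa0).resolve_left hμa
        have hterm : ∀ y ∈ Finset.univ, w a y * (v y - v a) = 0 := by
          rw [← Finset.sum_eq_zero_iff_of_nonpos]
          · exact hsum0
          · intro y _
            apply mul_nonpos_of_nonneg_of_nonpos (hwnn a y)
            have : v y ≤ v x₀ := hx₀ y
            rw [ha, ← hM]
            linarith
        have := hterm b (Finset.mem_univ b)
        rcases mul_eq_zero.mp this with h | h
        · exact absurd h hab.ne'
        · rw [ha] at h; linarith [sub_eq_zero.mp h]
      have hzero : ∀ z, v z = 0 := fun z =>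
        refltrans_invariant (fun a b ha hr => hprop a b ha hr) (hconn x₀ z) hM
      -- contradiction at p 0
      set j₀ : Fin N := ⟨0, hN⟩
      have hlapz : graphLap w μ v (p j₀) = 0 := by
        unfold graphLap
        rw [Finset.sum_eq_zero (fun y _ => by rw [hzero y, hzero (p j₀)]; ring)]
        ring
      have hpos : 0 < ∑ j, dirac μ (p j) (p j₀) := by
        have hle : dirac μ (p j₀) (p j₀) ≤ ∑ j, dirac μ (p j) (p j₀) := by
          apply Finset.single_le_sum (f := fun j => dirac μ (p j) (p j₀))
          · intro j _
            unfold dirac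
            split
            · exact (inv_pos.2 (hμ _)).le
            · exact le_rfl
          · exact Finset.mem_univ j₀
        have : dirac μ (p j₀) (p j₀) = (μ (p j₀))⁻¹ := by unfold dirac; rw [if_pos rfl]
        rw [this] at hle
        exact lt_of_lt_of_le (inv_pos.2 (hμ _)) hle
      have := hΔv (p j₀)
      rw [hlapz, hzero (p j₀), Real.exp_zero] at this
      have h4πp : 0 < 4 * π * ∑ j, dirac μ (p j) (p j₀) :=
        mul_pos (by positivity) hpos
      nlinarith
    intro x
    refine ⟨hlower x, ?_⟩
    have := hvneg x
    simp only [hv] at this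
    linarith
  have part2 : ∀ x, Tendsto (fun lam => U lam x) atTop (nhds (-u₀ x)) := by
    intro x
    have h1 : Tendsto (fun lam : ℝ => 16 * π * N * η / lam) atTop (nhds 0) :=
      Tendsto.div_atTop tendsto_const_nhds tendsto_id
    have h2 : Tendsto (fun lam : ℝ => 1 - 16 * π * N * η / lam) atTop (nhds 1) := by
      have := tendsto_const_nhds (α := ℝ) (f := atTop (α := ℝ)) (x := (1:ℝ)) |>.sub h1
      simpa using this
    have h3 : Tendsto (fun lam : ℝ => Real.sqrt (1 - 16 * π * N * η / lam)) atTop (nhds 1) := by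
      have := (Real.continuous_sqrt.tendsto 1).comp h2
      simpa [Function.comp_def] using this
    have h4 : Tendsto (fun lam : ℝ => (1 + Real.sqrt (1 - 16 * π * N * η / lam)) / 2)
        atTop (nhds 1) := by
      have := (tendsto_const_nhds (α := ℝ) (f := atTop (α := ℝ)) (x := (1:ℝ)) |>.add h3).div_const 2
      norm_num at this
      exact this
    have h5 : Tendsto (fun lam : ℝ =>
        Real.log ((1 + Real.sqrt (1 - 16 * π * N * η / lam)) / 2)) atTop (nhds 0) := by
      have := (Real.continuousAt_log one_ne_zero).tendsto.comp h4
      simpa [Function.comp_def] using this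
    have hlow : Tendsto (fun lam : ℝ =>
        -u₀ x + Real.log ((1 + Real.sqrt (1 - 16 * π * N * η / lam)) / 2)) atTop
        (nhds (-u₀ x)) := by
      have := tendsto_const_nhds (α := ℝ) (f := atTop (α := ℝ)) (x := -u₀ x) |>.add h5
      simpa using this
    apply tendsto_of_tendsto_of_tendsto_of_le_of_le' hlow tendsto_const_nhds
    · filter_upwards [eventually_gt_atTop (max lamc (16 * π * N * η))] with lam hlam
      exact (part1 lam (lt_of_le_of_lt (le_max_left _ _) hlam)
        (le_of_lt (lt_of_le_of_lt (le_max_right _ _) hlam)) x).1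
    · filter_upwards [eventually_gt_atTop (max lamc (16 * π * N * η))] with lam hlam
      exact (part1 lam (lt_of_le_of_lt (le_max_left _ _) hlam)
        (le_of_lt (lt_of_le_of_lt (le_max_right _ _) hlam)) x).2.le
  refine ⟨part1, part2, ?_⟩
  intro φ
  have hδ : ∀ j : Fin N, ∑ x, μ x * (dirac μ (p j) x * φ x) = φ (p j) := by
    intro j
    have hterm : ∀ x : V, μ x * (dirac μ (p j) x * φ x) = if x = p j then φ x else 0 := by
      intro x
      unfold dirac
      split
      · rw [← mul_assoc, mul_inv_cancel₀ (hμ x).ne', one_mul]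
      · ring
    rw [Finset.sum_congr rfl (fun x _ => hterm x), Finset.sum_ite_eq' Finset.univ (p j) φ]
    exact if_pos (Finset.mem_univ _)
  have hident : ∀ lam, lam > lamc →
      (∑ x, μ x * (lam * exp (u₀ x + U lam x) * (exp (u₀ x + U lam x) - 1) * φ x))
      = (∑ x, μ x * (graphLap w μ (fun y => u₀ y + U lam y) x * φ x))
        - 4 * π * ∑ j, φ (p j) := by
    intro lam hl
    obtain ⟨heq, -⟩ := hsol lam hl
    have hΔ : ∀ x, graphLap w μ (fun y => u₀ y + U lam y) x
        = lam * exp (u₀ x + U lam x) * (exp (u₀ x + U lam x) - 1)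
          + 4 * π * ∑ j, dirac μ (p j) x := by
      intro x
      rw [graphLap_add w μ u₀ (U lam) x, hu₀ x, heq x]
      ring
    have hterm : ∀ x : V, μ x * (lam * exp (u₀ x + U lam x) * (exp (u₀ x + U lam x) - 1) * φ x)
        = μ x * (graphLap w μ (fun y => u₀ y + U lam y) x * φ x)
          - 4 * π * ∑ j, μ x * (dirac μ (p j) x * φ x) := by
      intro x
      rw [hΔ x, ← Finset.mul_sum, ← Finset.sum_mul]
      ring
    rw [Finset.sum_congr rfl (fun x _ => hterm x), Finset.sum_sub_distrib]
    congr 1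
    rw [← Finset.mul_sum, Finset.sum_comm]
    congr 1
    exact Finset.sum_congr rfl fun j _ => hδ j
  have hpt : ∀ y, Tendsto (fun lam => u₀ y + U lam y) atTop (nhds 0) := by
    intro y
    have := tendsto_const_nhds (α := ℝ) (f := atTop (α := ℝ)) (x := u₀ y) |>.add (part2 y)
    simpa using this
  have hlap : ∀ x : V, Tendsto (fun lam => graphLap w μ (fun y => u₀ y + U lam y) x) atTop
      (nhds (graphLap w μ (fun _ => 0) x)) := fun x =>
    tendsto_graphLap w μ (fun lam y => u₀ y + U lam y) (fun _ => 0) hpt x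
  have hlap0 : ∀ x : V, graphLap w μ (fun _ : V => (0:ℝ)) x = 0 := by
    intro x; simp [graphLap]
  have hzero : Tendsto (fun lam => ∑ x, μ x *
      (graphLap w μ (fun y => u₀ y + U lam y) x * φ x)) atTop (nhds 0) := by
    have := tendsto_finset_sum Finset.univ
      (fun x (_ : x ∈ Finset.univ) => (((hlap x).mul_const (φ x)).const_mul (μ x)))
    simpa [hlap0] using this
  have hfinal : Tendsto (fun lam => (∑ x, μ x *
      (graphLap w μ (fun y => u₀ y + U lam y) x * φ x)) - 4 * π * ∑ j, φ (p j)) atTop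
      (nhds (-(4 * π * ∑ j, φ (p j)))) := by
    have := hzero.sub (tendsto_const_nhds (α := ℝ) (f := atTop (α := ℝ))
      (x := 4 * π * ∑ j, φ (p j)))
    simpa using this
  apply hfinal.congr'
  filter_upwards [eventually_gt_atTop lamc] with lam hl
  exact (hident lam hl).symm
end
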